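/- For every integer K ≥ 4, define v₃₀₀(K) = −(K²+1)(5K²−24)/(6K²(K²−4)), v₁₂₀(K) = w₂₁₀(K) = −(K²+1)(4K⁴−27K²+4)/(K²(K²−4)(4K²−1)), and w₀₃₀(K) = −(K²+1)(24K²−5)/(6K²(4K²−1)). Then (v₃₀₀(K) − w₂₁₀(K))/(w₀₃₀(K) − v₁₂₀(K)) = −K²(4K²−61)/(61K²−4), and this quantity is negative. Consequently, the only real solution t of the cubic equation (w₀₃₀(K) − v₁₂₀(K))·t³ − (v₃₀₀(K) − w₂₁₀(K))·t = 0 is t = 0. -/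

import Mathlib

/-- For K ≥ 4, the ratio (v₃₀₀ − w₂₁₀)/(w₀₃₀ − v₁₂₀) equals −K²(4K²−61)/(61K²−4) and is
negative, so the cubic (w₀₃₀ − v₁₂₀)t³ − (v₃₀₀ − w₂₁₀)t has t = 0 as its only real root. -/
theorem kawahara_K_ge_4_cubic_only_trivial_root (K : ℕ) (hK : 4 ≤ K)
    (v300 v120 w210 w030 : ℝ)
    (hv300 : v300 = -(((K : ℝ) ^ 2 + 1) * (5 * (K : ℝ) ^ 2 - 24))
      / (6 * (K : ℝ) ^ 2 * ((K : ℝ) ^ 2 - 4)))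
    (hv120 : v120 = -(((K : ℝ) ^ 2 + 1) * (4 * (K : ℝ) ^ 4 - 27 * (K : ℝ) ^ 2 + 4))
      / ((K : ℝ) ^ 2 * ((K : ℝ) ^ 2 - 4) * (4 * (K : ℝ) ^ 2 - 1)))
    (hw210 : w210 = v120)
    (hw030 : w030 = -(((K : ℝ) ^ 2 + 1) * (24 * (K : ℝ) ^ 2 - 5))
      / (6 * (K : ℝ) ^ 2 * (4 * (K : ℝ) ^ 2 - 1))) :
    (v300 - w210) / (w030 - v120)
      = -((K : ℝ) ^ 2 * (4 * (K : ℝ) ^ 2 - 61)) / (61 * (K : ℝ) ^ 2 - 4) ∧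
    (v300 - w210) / (w030 - v120) < 0 ∧
    (∀ t : ℝ, (w030 - v120) * t ^ 3 - (v300 - w210) * t = 0 → t = 0) := by
  have hx : (16 : ℝ) ≤ (K : ℝ) ^ 2 := by
    have : (4 : ℝ) ≤ (K : ℝ) := by exact_mod_cast hK
    nlinarith
  set x : ℝ := (K : ℝ) ^ 2 with hxdef
  have h0 : x ≠ 0 := by nlinarith
  have h4 : x - 4 ≠ 0 := by nlinarith
  have h41 : 4 * x - 1 ≠ 0 := by nlinarith
  have h4' : (0:ℝ) < x - 4 := by nlinarith
  have h41' : (0:ℝ) < 4 * x - 1 := by nlinarith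
  have hD : 6 * x * (x - 4) * (4 * x - 1) > 0 :=
    mul_pos (mul_pos (by nlinarith : (0:ℝ) < 6 * x) h4') h41'
  have hA : v300 - w210 = x * (x + 1) * (4 * x - 61) / (6 * x * (x - 4) * (4 * x - 1)) := by
    rw [hv300, hw210, hv120]
    have hx4 : (K : ℝ) ^ 4 = x ^ 2 := by rw [hxdef]; ring
    rw [hx4]
    rw [div_sub_div _ _ (by positivity) (by positivity), div_eq_div_iff (by positivity) (by positivity)]
    ring
  have hB : w030 - v120 = -((x + 1) * (61 * x - 4)) / (6 * x * (x - 4) * (4 * x - 1)) := by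
    rw [hw030, hv120]
    have hx4 : (K : ℝ) ^ 4 = x ^ 2 := by rw [hxdef]; ring
    rw [hx4]
    field_simp
    ring
  have hApos : 0 < v300 - w210 := by
    rw [hA]
    apply div_pos (by nlinarith) hD
  have hBneg : w030 - v120 < 0 := by
    rw [hB]
    apply div_neg_of_neg_of_pos (by nlinarith) hD
  have h61 : (61 : ℝ) * x - 4 ≠ 0 := by nlinarith
  have hratio : (v300 - w210) / (w030 - v120) = -(x * (4 * x - 61)) / (61 * x - 4) := by
    rw [hA, hB]
    rw [div_div_div_eq]
    have hne2 : 6 * x * (x - 4) * (4 * x - 1) * -((x + 1) * (61 * x - 4)) ≠ 0 :=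
      (mul_neg_of_pos_of_neg hD (by nlinarith)).ne
    rw [div_eq_div_iff hne2 h61]
    ring
  refine ⟨hratio, ?_, ?_⟩
  · rw [hratio]
    apply div_neg_of_neg_of_pos (by nlinarith) (by nlinarith)
  · intro t ht
    by_contra htne
    have h1 : t * ((w030 - v120) * t ^ 2 - (v300 - w210)) = 0 := by linarith [ht]; 
    rcases mul_eq_zero.mp h1 with h | h
    · exact htne h
    · nlinarith [sq_nonneg t, mul_nonpos_of_nonpos_of_nonneg (le_of_lt hBneg) (sq_nonneg t)]
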